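/- Let u be a classical solution of the n-vortex equation with finite energy which is not identically zero, and set Q₀ = Q(u). If |n| ≥ Q₀/π, then κ < 0. -/

import Mathlib

open MeasureTheory Set Filter

noncomputable section

/-- The Bessel function `J₀`. -/
def besselJ0 (x : ℝ) : ℝ :=
  ∑' m : ℕ, (-1 : ℝ) ^ m * (x / 2) ^ (2 * m) / ((Nat.factorial m : ℝ)) ^ 2

/-- The smallest positive zero of `J₀` (≈ 2.404826). -/
def besselR0 : ℝ := sInf {x : ℝ | 0 < x ∧ besselJ0 x = 0}

/-- `u` is a classical solution of the `n`-vortex equation with parameters `(α, n, κ, R)`. -/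
def IsVortexSol (α : ℝ) (n : ℤ) (κ R : ℝ) (u : ℝ → ℝ) : Prop :=
  ContinuousOn u (Icc 0 R) ∧
  (∀ r ∈ Ioo (0 : ℝ) R, DifferentiableAt ℝ u r ∧ DifferentiableAt ℝ (deriv u) r) ∧
  u 0 = 0 ∧ u R = 0 ∧
  ∀ r ∈ Ioo (0 : ℝ) R,
    deriv (fun s => s * deriv u s) r - ((n : ℝ) ^ 2 / r) * u r
      + 2 * r * (u r) ^ 3 / (1 + α * (u r) ^ 2) - 2 * κ * r * u r = 0

/-- `u` has finite energy. -/
def FiniteEnergy (α R : ℝ) (u : ℝ → ℝ) : Prop :=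
  IntegrableOn
    (fun r => r * (deriv u r) ^ 2 + (u r) ^ 2 / r + r * Real.log (1 + α * (u r) ^ 2))
    (Ioo 0 R)

/-- The energy flux `Q(u) = 2π ∫₀^R r u(r)² dr`. -/
def fluxQ (R : ℝ) (u : ℝ → ℝ) : ℝ := 2 * Real.pi * ∫ r in Ioo (0 : ℝ) R, r * (u r) ^ 2

/-- The tent function with parameters `a` and `b`. -/
def tent (a b : ℝ) : ℝ → ℝ := fun r => if r ≤ a then (b / a) * r else (b / a) * (2 * a - r)

/-- The action functional `I_κ`. -/
def actI (α : ℝ) (n : ℤ) (κ R : ℝ) (u : ℝ → ℝ) : ℝ :=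
  (1 / 2) * ∫ r in Ioo (0 : ℝ) R,
    (r * (deriv u r) ^ 2 + ((n : ℝ) ^ 2 / r) * (u r) ^ 2
      - 2 * (α⁻¹ - κ) * r * (u r) ^ 2 + 2 * (α ^ 2)⁻¹ * r * Real.log (1 + α * (u r) ^ 2))

/-- The action functional `𝓘`. -/
def actI0 (α : ℝ) (n : ℤ) (R : ℝ) (u : ℝ → ℝ) : ℝ :=
  (1 / 2) * ∫ r in Ioo (0 : ℝ) R,
    (r * (deriv u r) ^ 2 + ((n : ℝ) ^ 2 / r) * (u r) ^ 2
      - 2 * α⁻¹ * r * (u r) ^ 2 + 2 * (α ^ 2)⁻¹ * r * Real.log (1 + α * (u r) ^ 2))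

/-- The functional `γ_κ`. -/
def gammaK (α : ℝ) (n : ℤ) (κ R : ℝ) (u : ℝ → ℝ) : ℝ :=
  (1 / 2) * ∫ r in Ioo (0 : ℝ) R,
    (r * (deriv u r) ^ 2 + ((n : ℝ) ^ 2 / r) * (u r) ^ 2
      - 2 * (α⁻¹ - κ) * r * (u r) ^ 2 + 2 * α⁻¹ * r * (u r) ^ 2 / (1 + α * (u r) ^ 2))

/-- Membership in the class `X`. -/
def MemX (R : ℝ) (u : ℝ → ℝ) : Prop :=
  ContinuousOn u (Icc 0 R) ∧ ContDiffOn ℝ 1 u (Ioo 0 R) ∧ u 0 = 0 ∧ u R = 0 ∧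
    IntegrableOn (fun r => r * (deriv u r) ^ 2 + (u r) ^ 2 / r) (Ioo 0 R)

/-- Membership in the class `X`, allowing finitely many exceptional points. -/
def MemX' (R : ℝ) (u : ℝ → ℝ) : Prop :=
  ContinuousOn u (Icc 0 R) ∧ (∃ S : Finset ℝ, ContDiffOn ℝ 1 u (Ioo 0 R \ ↑S)) ∧
    u 0 = 0 ∧ u R = 0 ∧
    IntegrableOn (fun r => r * (deriv u r) ^ 2 + (u r) ^ 2 / r) (Ioo 0 R)

/-- The admissible class `𝒜`. -/
def Admissible (α R : ℝ) (v : ℝ → ℝ) : Prop :=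
  (∃ K : NNReal, LipschitzOnWith K v (Icc 0 R)) ∧ v 0 = 0 ∧ v R = 0 ∧ FiniteEnergy α R v

end


section core
variable {α : ℝ} {n : ℤ} {κ R : ℝ} {u : ℝ → ℝ}

lemma vortex_cont_u (hdiff : ∀ r ∈ Ioo (0 : ℝ) R, DifferentiableAt ℝ u r ∧ DifferentiableAt ℝ (deriv u) r)
    {a b : ℝ} (hsub : Icc a b ⊆ Ioo (0:ℝ) R) : ContinuousOn u (Icc a b) :=
  fun x hx => ((hdiff x (hsub hx)).1.continuousAt).continuousWithinAt

lemma vortex_cont_du (hdiff : ∀ r ∈ Ioo (0 : ℝ) R, DifferentiableAt ℝ u r ∧ DifferentiableAt ℝ (deriv u) r)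
    {a b : ℝ} (hsub : Icc a b ⊆ Ioo (0:ℝ) R) : ContinuousOn (deriv u) (Icc a b) :=
  fun x hx => ((hdiff x (hsub hx)).2.continuousAt).continuousWithinAt

lemma vortex_cont_F (hdiff : ∀ r ∈ Ioo (0 : ℝ) R, DifferentiableAt ℝ u r ∧ DifferentiableAt ℝ (deriv u) r)
    {a b : ℝ} (hsub : Icc a b ⊆ Ioo (0:ℝ) R) :
    ContinuousOn (fun x => x * (deriv u x)^2 + ((n:ℝ)^2/x) * (u x)^2) (Icc a b) := by
  have h1 := vortex_cont_u hdiff hsub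
  have h2 := vortex_cont_du hdiff hsub
  have h3 : ∀ x ∈ Icc a b, x ≠ 0 := fun x hx => ne_of_gt (hsub hx).1
  exact (continuousOn_id.mul (h2.pow 2)).add ((continuousOn_const.div continuousOn_id h3).mul (h1.pow 2))

lemma vortex_cont_G (hα : 0 < α)
    (hdiff : ∀ r ∈ Ioo (0 : ℝ) R, DifferentiableAt ℝ u r ∧ DifferentiableAt ℝ (deriv u) r)
    {a b : ℝ} (hsub : Icc a b ⊆ Ioo (0:ℝ) R) :
    ContinuousOn (fun x => 2*x*(u x)^4/(1+α*(u x)^2) - 2*κ*x*(u x)^2) (Icc a b) := by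
  have h1 := vortex_cont_u hdiff hsub
  have hden : ∀ x ∈ Icc a b, (1:ℝ) + α*(u x)^2 ≠ 0 := fun x _ => by positivity
  exact (((continuousOn_const.mul continuousOn_id).mul (h1.pow 4)).div
    (continuousOn_const.add (continuousOn_const.mul (h1.pow 2))) hden).sub
    ((continuousOn_const.mul continuousOn_id).mul (h1.pow 2))

/-- Key integral identity for the vortex equation, via FTC applied to `r u'(r) u(r)`. -/
lemma vortex_FTC (hα : 0 < α)
    (hdiff : ∀ r ∈ Ioo (0 : ℝ) R, DifferentiableAt ℝ u r ∧ DifferentiableAt ℝ (deriv u) r)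
    (hode : ∀ r ∈ Ioo (0 : ℝ) R,
      deriv (fun s => s * deriv u s) r - ((n : ℝ) ^ 2 / r) * u r
        + 2 * r * (u r) ^ 3 / (1 + α * (u r) ^ 2) - 2 * κ * r * u r = 0)
    {a b : ℝ} (ha : a ∈ Ioo (0:ℝ) R) (hb : b ∈ Ioo (0:ℝ) R) (hab : a ≤ b) :
    ∫ x in a..b, (x * (deriv u x)^2 + ((n:ℝ)^2/x) * (u x)^2) =
      (b * deriv u b * u b - a * deriv u a * u a)
        + ∫ x in a..b, (2*x*(u x)^4/(1+α*(u x)^2) - 2*κ*x*(u x)^2) := by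
  have hsub : Icc a b ⊆ Ioo (0:ℝ) R := fun x hx => ⟨lt_of_lt_of_le ha.1 hx.1, lt_of_le_of_lt hx.2 hb.2⟩
  have hFi : IntervalIntegrable (fun x => x * (deriv u x)^2 + ((n:ℝ)^2/x) * (u x)^2) volume a b := by
    apply ContinuousOn.intervalIntegrable
    rw [Set.uIcc_of_le hab]
    exact vortex_cont_F hdiff hsub
  have hGi : IntervalIntegrable (fun x => 2*x*(u x)^4/(1+α*(u x)^2) - 2*κ*x*(u x)^2) volume a b := by
    apply ContinuousOn.intervalIntegrable
    rw [Set.uIcc_of_le hab]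
    exact vortex_cont_G hα hdiff hsub
  have hder : ∀ x ∈ Set.uIcc a b, HasDerivAt (fun r => r * deriv u r * u r)
      ((x * (deriv u x)^2 + ((n:ℝ)^2/x) * (u x)^2)
        - (2*x*(u x)^4/(1+α*(u x)^2) - 2*κ*x*(u x)^2)) x := by
    intro x hx
    rw [Set.uIcc_of_le hab] at hx
    have hxI : x ∈ Ioo (0:ℝ) R := hsub hx
    have h1 : HasDerivAt (fun s => s * deriv u s) (deriv (fun s => s * deriv u s) x) x :=
      (differentiableAt_id.mul (hdiff x hxI).2).hasDerivAt
    have h2 : HasDerivAt u (deriv u x) x := (hdiff x hxI).1.hasDerivAt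
    have h3 : HasDerivAt (fun r => r * deriv u r * u r)
        (deriv (fun s => s * deriv u s) x * u x + x * deriv u x * deriv u x) x := h1.mul h2
    have heq := hode x hxI
    have hx0 : x ≠ 0 := ne_of_gt hxI.1
    have hden : (1:ℝ) + α * (u x)^2 ≠ 0 := by positivity
    have hD : deriv (fun s => s * deriv u s) x
        = ((n:ℝ)^2/x) * u x - 2*x*(u x)^3/(1+α*(u x)^2) + 2*κ*x*u x := by linarith
    convert h3 using 1
    rw [hD]
    field_simp
    ring
  have h5 := intervalIntegral.integral_eq_sub_of_hasDerivAt hder (hFi.sub hGi)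
  rw [intervalIntegral.integral_sub hFi hGi] at h5
  linarith

/-- FTC for `u²`. -/
lemma vortex_sq_FTC (hdiff : ∀ r ∈ Ioo (0 : ℝ) R, DifferentiableAt ℝ u r ∧ DifferentiableAt ℝ (deriv u) r)
    {a b : ℝ} (ha : a ∈ Ioo (0:ℝ) R) (hb : b ∈ Ioo (0:ℝ) R) (hab : a ≤ b) :
    (u b)^2 - (u a)^2 = ∫ x in a..b, 2 * u x * deriv u x := by
  have hsub : Icc a b ⊆ Ioo (0:ℝ) R := fun x hx => ⟨lt_of_lt_of_le ha.1 hx.1, lt_of_le_of_lt hx.2 hb.2⟩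
  have hder : ∀ x ∈ Set.uIcc a b, HasDerivAt (fun r => (u r)^2) (2 * u x * deriv u x) x := by
    intro x hx
    rw [Set.uIcc_of_le hab] at hx
    have h2 : HasDerivAt u (deriv u x) x := (hdiff x (hsub hx)).1.hasDerivAt
    have : HasDerivAt (fun r => u r * u r) (deriv u x * u x + u x * deriv u x) x := h2.mul h2
    convert this using 1
    · funext r; ring
    · ring
  have hInt : IntervalIntegrable (fun x => 2 * u x * deriv u x) volume a b := by
    apply ContinuousOn.intervalIntegrable
    rw [Set.uIcc_of_le hab]
    exact (continuousOn_const.mul (vortex_cont_u hdiff hsub)).mul (vortex_cont_du hdiff hsub)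
  exact (intervalIntegral.integral_eq_sub_of_hasDerivAt hder hInt).symm

/-- AM–GM lower bound for the energy integrand. -/
lemma vortex_lower (hdiff : ∀ r ∈ Ioo (0 : ℝ) R, DifferentiableAt ℝ u r ∧ DifferentiableAt ℝ (deriv u) r)
    {a b : ℝ} (ha : a ∈ Ioo (0:ℝ) R) (hb : b ∈ Ioo (0:ℝ) R) (hab : a ≤ b) :
    (((|n| : ℤ) : ℝ) * ((u b)^2 - (u a)^2) ≤
        ∫ x in a..b, (x * (deriv u x)^2 + ((n:ℝ)^2/x) * (u x)^2)) ∧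
      (((|n| : ℤ) : ℝ) * ((u a)^2 - (u b)^2) ≤
        ∫ x in a..b, (x * (deriv u x)^2 + ((n:ℝ)^2/x) * (u x)^2)) := by
  have hsub : Icc a b ⊆ Ioo (0:ℝ) R := fun x hx => ⟨lt_of_lt_of_le ha.1 hx.1, lt_of_le_of_lt hx.2 hb.2⟩
  set N : ℝ := ((|n| : ℤ) : ℝ) with hN
  have hN2 : N^2 = ((n:ℝ))^2 := by
    rw [hN]
    push_cast
    exact sq_abs _
  have hFi : IntervalIntegrable (fun x => x * (deriv u x)^2 + ((n:ℝ)^2/x) * (u x)^2) volume a b := by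
    apply ContinuousOn.intervalIntegrable
    rw [Set.uIcc_of_le hab]
    exact vortex_cont_F hdiff hsub
  have hInt : IntervalIntegrable (fun x => 2 * u x * deriv u x) volume a b := by
    apply ContinuousOn.intervalIntegrable
    rw [Set.uIcc_of_le hab]
    exact (continuousOn_const.mul (vortex_cont_u hdiff hsub)).mul (vortex_cont_du hdiff hsub)
  have hsq := vortex_sq_FTC hdiff ha hb hab
  have hpoint : ∀ x ∈ Icc a b, ∀ σ : ℝ, σ = 1 ∨ σ = -1 →
      N * (σ * (2 * u x * deriv u x)) ≤ x * (deriv u x)^2 + ((n:ℝ)^2/x) * (u x)^2 := by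
    intro x hx σ hσ
    have hx0 : 0 < x := (hsub hx).1
    have hkey : x * (deriv u x)^2 + ((n:ℝ)^2/x) * (u x)^2 - N * (σ * (2 * u x * deriv u x))
        = (x * deriv u x - σ * N * u x)^2 / x + ((n:ℝ)^2 - N^2) * (u x)^2 / x := by
      have hσ2 : σ^2 = 1 := by rcases hσ with h | h <;> rw [h] <;> norm_num
      field_simp
      linear_combination (-(N^2 * (u x)^2)) * hσ2
    have h1 : 0 ≤ (x * deriv u x - σ * N * u x)^2 / x := by positivity
    have h2 : ((n:ℝ)^2 - N^2) * (u x)^2 / x = 0 := by rw [hN2]; ring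
    linarith [hkey, h1, h2]
  constructor
  · have hm : ∫ x in a..b, N * (2 * u x * deriv u x) ≤
        ∫ x in a..b, (x * (deriv u x)^2 + ((n:ℝ)^2/x) * (u x)^2) := by
      apply intervalIntegral.integral_mono_on hab (hInt.const_mul N) hFi
      intro x hx
      have := hpoint x hx 1 (Or.inl rfl)
      simpa using this
    rw [intervalIntegral.integral_const_mul, ← hsq] at hm
    exact hm
  · have hm : ∫ x in a..b, N * (-1 * (2 * u x * deriv u x)) ≤
        ∫ x in a..b, (x * (deriv u x)^2 + ((n:ℝ)^2/x) * (u x)^2) := by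
      apply intervalIntegral.integral_mono_on hab ((hInt.const_mul (-1)).const_mul N) hFi
      intro x hx
      exact hpoint x hx (-1) (Or.inr rfl)
    have heq2 : ∫ x in a..b, N * (-1 * (2 * u x * deriv u x))
        = -(N * ∫ x in a..b, 2 * u x * deriv u x) := by
      rw [show (fun x => N * (-1 * (2 * u x * deriv u x))) = (fun x => (-N) * (2 * u x * deriv u x)) by funext x; ring]
      rw [intervalIntegral.integral_const_mul]
      ring
    rw [heq2, ← hsq] at hm
    linarith
/-- Decay of `u` near the right endpoint from `L²` bound on `u'`. -/
lemma vortex_decay (hR : 0 < R)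
    (hdiff : ∀ r ∈ Ioo (0 : ℝ) R, DifferentiableAt ℝ u r ∧ DifferentiableAt ℝ (deriv u) r)
    (hcont : ContinuousOn u (Icc 0 R)) (huR : u R = 0)
    (hIdu : IntegrableOn (fun r => (deriv u r)^2) (Ioo (R/2) R))
    {b : ℝ} (hb : b ∈ Ioo (R/2) R) :
    |u b| ≤ Real.sqrt (R - b) * (((∫ x in Ioo (R/2) R, (deriv u x)^2) + 1) / 2) := by
  set I : ℝ := ∫ x in Ioo (R/2) R, (deriv u x)^2 with hI
  have hIpos : 0 ≤ I := setIntegral_nonneg measurableSet_Ioo (fun x _ => sq_nonneg _)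
  set s : ℝ := Real.sqrt (R - b) with hsdef
  have hspos : 0 < s := Real.sqrt_pos.mpr (by linarith [hb.2])
  have hs2 : s^2 = R - b := Real.sq_sqrt (by linarith [hb.2])
  have hb0 : 0 < b := by linarith [hb.1, hR]
  have hstep : ∀ c ∈ Ioo b R, |u c - u b| ≤ s * ((I + 1) / 2) := by
    intro c hc
    have hbc : b ≤ c := hc.1.le
    have hsub2 : Icc b c ⊆ Ioo (0:ℝ) R :=
      fun x hx => ⟨by linarith [hx.1], by linarith [hx.2, hc.2]⟩
    have hcu' : ContinuousOn (deriv u) (Icc b c) := vortex_cont_du hdiff hsub2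
    have hftc : u c - u b = ∫ x in b..c, deriv u x := by
      refine (intervalIntegral.integral_eq_sub_of_hasDerivAt (fun x hx => ?_) ?_).symm
      · rw [Set.uIcc_of_le hbc] at hx
        exact (hdiff x (hsub2 hx)).1.hasDerivAt
      · apply ContinuousOn.intervalIntegrable
        rw [Set.uIcc_of_le hbc]
        exact hcu'
    have hi1 : IntervalIntegrable (fun x => |deriv u x|) volume b c := by
      apply ContinuousOn.intervalIntegrable
      rw [Set.uIcc_of_le hbc]
      exact hcu'.abs
    have hi2 : IntervalIntegrable (fun x => (s * (deriv u x)^2 + 1/s) / 2) volume b c := by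
      apply ContinuousOn.intervalIntegrable
      rw [Set.uIcc_of_le hbc]
      exact ((continuousOn_const.mul (hcu'.pow 2)).add continuousOn_const).div_const 2
    have h1 : |u c - u b| ≤ ∫ x in b..c, |deriv u x| := by
      rw [hftc]
      exact intervalIntegral.abs_integral_le_integral_abs hbc
    have h2 : ∫ x in b..c, |deriv u x| ≤ ∫ x in b..c, (s * (deriv u x)^2 + 1/s) / 2 := by
      apply intervalIntegral.integral_mono_on hbc hi1 hi2
      intro x _
      set t : ℝ := |deriv u x| with ht
      have ht2 : t^2 = (deriv u x)^2 := sq_abs _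
      have hid : s * (deriv u x)^2 + 1/s - 2*t = (s*t - 1)^2 / s := by
        rw [← ht2]; field_simp; ring
      have : 0 ≤ (s*t - 1)^2 / s := by positivity
      linarith
    have h3 : ∫ x in b..c, (s * (deriv u x)^2 + 1/s) / 2
        = (s * (∫ x in b..c, (deriv u x)^2) + (c - b) * (1/s)) / 2 := by
      have hi3 : IntervalIntegrable (fun x => s * (deriv u x)^2) volume b c := by
        apply ContinuousOn.intervalIntegrable
        rw [Set.uIcc_of_le hbc]
        exact continuousOn_const.mul (hcu'.pow 2)
      rw [intervalIntegral.integral_div, intervalIntegral.integral_add hi3 intervalIntegrable_const,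
        intervalIntegral.integral_const_mul, intervalIntegral.integral_const, smul_eq_mul]
    have h4 : ∫ x in b..c, (deriv u x)^2 ≤ I := by
      rw [intervalIntegral.integral_of_le hbc]
      refine setIntegral_mono_set hIdu ?_ ?_
      · filter_upwards [ae_restrict_mem measurableSet_Ioo] with x _ using sq_nonneg _
      · refine HasSubset.Subset.eventuallyLE (fun x hx => ⟨by linarith [hx.1, hb.1], by linarith [hx.2, hc.2]⟩)
    have h5 : (c - b) * (1/s) ≤ s := by
      rw [mul_one_div, div_le_iff₀ hspos]
      nlinarith [hc.2, hs2]
    calc |u c - u b| ≤ (s * (∫ x in b..c, (deriv u x)^2) + (c - b) * (1/s)) / 2 := by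
            rw [← h3]; linarith
      _ ≤ (s * I + s) / 2 := by nlinarith [mul_le_mul_of_nonneg_left h4 hspos.le]
      _ = s * ((I + 1) / 2) := by ring
  have hlim : Tendsto (fun c => |u c|) (nhdsWithin R (Ioo b R)) (nhds 0) := by
    have h8 : ContinuousWithinAt u (Icc 0 R) R := hcont R (right_mem_Icc.mpr hR.le)
    have h9 := h8.mono (show Ioo b R ⊆ Icc 0 R from fun x hx => ⟨by linarith [hx.1], hx.2.le⟩)
    have h10 : Tendsto u (nhdsWithin R (Ioo b R)) (nhds 0) := by
      rw [← huR]; exact h9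
    simpa using h10.abs
  have hNB : (nhdsWithin R (Ioo b R)).NeBot := right_nhdsWithin_Ioo_neBot hb.2
  have hle : |u b| - s * ((I + 1) / 2) ≤ 0 := by
    refine ge_of_tendsto hlim ?_
    refine eventually_nhdsWithin_of_forall (fun c hc => ?_)
    have h11 := hstep c hc
    have h12 : |u b| - |u c| ≤ |u b - u c| := abs_sub_abs_le_abs_sub _ _
    rw [abs_sub_comm] at h12
    linarith
  linarith

lemma vortex_upper (hα : 0 < α) (hκ : 0 ≤ κ)
    (hdiff : ∀ r ∈ Ioo (0 : ℝ) R, DifferentiableAt ℝ u r ∧ DifferentiableAt ℝ (deriv u) r)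
    {a b M : ℝ} (ha : a ∈ Ioo (0:ℝ) R) (hb : b ∈ Ioo (0:ℝ) R) (hab : a ≤ b)
    (hmax : ∀ x ∈ Icc a b, (u x)^2 ≤ M)
    (hIru : IntegrableOn (fun r => r * (u r)^2) (Ioo 0 R)) :
    ∫ x in a..b, (2*x*(u x)^4/(1+α*(u x)^2) - 2*κ*x*(u x)^2)
      ≤ 2 * M * ∫ r in Ioo (0:ℝ) R, r * (u r)^2 := by
  have hsub : Icc a b ⊆ Ioo (0:ℝ) R := fun x hx => ⟨lt_of_lt_of_le ha.1 hx.1, lt_of_le_of_lt hx.2 hb.2⟩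
  have hM0 : 0 ≤ M := le_trans (sq_nonneg (u a)) (hmax a (left_mem_Icc.mpr hab))
  have hGi : IntervalIntegrable (fun x => 2*x*(u x)^4/(1+α*(u x)^2) - 2*κ*x*(u x)^2) volume a b := by
    apply ContinuousOn.intervalIntegrable
    rw [Set.uIcc_of_le hab]
    exact vortex_cont_G hα hdiff hsub
  have hHi : IntervalIntegrable (fun x => 2*M*(x*(u x)^2)) volume a b := by
    apply ContinuousOn.intervalIntegrable
    rw [Set.uIcc_of_le hab]
    exact continuousOn_const.mul (continuousOn_id.mul ((vortex_cont_u hdiff hsub).pow 2))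
  have h1 : ∫ x in a..b, (2*x*(u x)^4/(1+α*(u x)^2) - 2*κ*x*(u x)^2)
      ≤ ∫ x in a..b, 2*M*(x*(u x)^2) := by
    apply intervalIntegral.integral_mono_on hab hGi hHi
    intro x hx
    have hx0 : (0:ℝ) < x := (hsub hx).1
    have hu2 : (u x)^2 ≤ M := hmax x hx
    have hd1 : (1:ℝ) ≤ 1 + α*(u x)^2 := by nlinarith [mul_nonneg hα.le (sq_nonneg (u x))]
    have h2 : 2*x*(u x)^4/(1+α*(u x)^2) ≤ 2*x*(u x)^4 :=
      div_le_self (by positivity) hd1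
    have h3 : 2*x*(u x)^4 ≤ 2*M*(x*(u x)^2) := by nlinarith [mul_nonneg (mul_nonneg hx0.le (sq_nonneg (u x))) (sub_nonneg.mpr hu2)]
    have h4 : 0 ≤ 2*κ*x*(u x)^2 := by positivity
    linarith
  have h2 : ∫ x in a..b, 2*M*(x*(u x)^2) = 2*M * ∫ x in a..b, x*(u x)^2 :=
    intervalIntegral.integral_const_mul _ _
  have h3 : ∫ x in a..b, x*(u x)^2 ≤ ∫ r in Ioo (0:ℝ) R, r * (u r)^2 := by
    rw [intervalIntegral.integral_of_le hab]
    refine setIntegral_mono_set hIru ?_ ?_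
    · filter_upwards [ae_restrict_mem measurableSet_Ioo] with x hx
      exact mul_nonneg hx.1.le (sq_nonneg _)
    · exact HasSubset.Subset.eventuallyLE
        (fun x hx => ⟨lt_of_lt_of_le ha.1 hx.1.le, lt_of_le_of_lt hx.2 hb.2⟩)
  have h4 : 2*M * ∫ x in a..b, x*(u x)^2 ≤ 2*M * ∫ r in Ioo (0:ℝ) R, r * (u r)^2 :=
    mul_le_mul_of_nonneg_left h3 (by linarith)
  linarith

end core

/-- If `g` is integrable on `(c,d)`, then `(d-x) * g x` gets below any `ε > 0`. -/
lemma exists_small_right (g : ℝ → ℝ) (c d : ℝ) (hcd : c < d)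
    (hg : IntegrableOn g (Ioo c d)) (ε : ℝ) (hε : 0 < ε) :
    ∃ x ∈ Ioo c d, (d - x) * g x < ε := by
  by_contra hcon
  push_neg at hcon
  have hb : IntegrableOn (fun x => (x - d)⁻¹) (Ioo c d) := by
    refine Integrable.mono (hg.const_mul ε⁻¹) ?_ ?_
    · exact ((measurable_id.sub measurable_const).inv).aestronglyMeasurable
    · filter_upwards [ae_restrict_mem measurableSet_Ioo] with x hx
      have h1 := hcon x hx
      have hdx : 0 < d - x := by linarith [hx.2]
      have hgx : 0 < g x := by nlinarith
      have h2 : (d - x)⁻¹ ≤ ε⁻¹ * g x := by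
        rw [inv_eq_one_div, div_le_iff₀ hdx]
        have h5 : 0 ≤ (d - x) * g x - ε := by linarith
        have h6 : ε⁻¹ * g x * (d - x) - 1 = ε⁻¹ * ((d - x) * g x - ε) := by
          field_simp
        rw [← sub_nonneg, h6]
        exact mul_nonneg (by positivity) h5
      have h3 : |(x - d)⁻¹| = (d - x)⁻¹ := by
        rw [abs_inv, abs_of_neg (by linarith : x - d < 0)]; ring_nf
      rw [Real.norm_eq_abs, Real.norm_eq_abs, h3, abs_of_nonneg (by positivity)]
      exact h2
  have h4 : IntervalIntegrable (fun x => (x - d)⁻¹) volume c d := by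
    rw [intervalIntegrable_iff_integrableOn_Ioo_of_le hcd.le]; exact hb
  rw [intervalIntegrable_sub_inv_iff] at h4
  rcases h4 with h | h
  · exact hcd.ne h
  · exact h Set.right_mem_uIcc

lemma exists_small_left (g : ℝ → ℝ) (c d : ℝ) (hcd : c < d)
    (hg : IntegrableOn g (Ioo c d)) (ε : ℝ) (hε : 0 < ε) :
    ∃ x ∈ Ioo c d, (x - c) * g x < ε := by
  by_contra hcon
  push_neg at hcon
  have hb : IntegrableOn (fun x => (x - c)⁻¹) (Ioo c d) := by
    refine Integrable.mono (hg.const_mul ε⁻¹) ?_ ?_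
    · exact ((measurable_id.sub measurable_const).inv).aestronglyMeasurable
    · filter_upwards [ae_restrict_mem measurableSet_Ioo] with x hx
      have h1 := hcon x hx
      have hdx : 0 < x - c := by linarith [hx.1]
      have hgx : 0 < g x := by nlinarith
      have h2 : (x - c)⁻¹ ≤ ε⁻¹ * g x := by
        rw [inv_eq_one_div, div_le_iff₀ hdx]
        have h5 : 0 ≤ (x - c) * g x - ε := by linarith
        have h6 : ε⁻¹ * g x * (x - c) - 1 = ε⁻¹ * ((x - c) * g x - ε) := by
          field_simp
        rw [← sub_nonneg, h6]
        exact mul_nonneg (by positivity) h5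
      rw [Real.norm_eq_abs, Real.norm_eq_abs, abs_of_nonneg (by positivity),
        abs_of_nonneg (by positivity)]
      exact h2
  have h4 : IntervalIntegrable (fun x => (x - c)⁻¹) volume c d := by
    rw [intervalIntegrable_iff_integrableOn_Ioo_of_le hcd.le]; exact hb
  rw [intervalIntegrable_sub_inv_iff] at h4
  rcases h4 with h | h
  · exact hcd.ne h
  · exact h Set.left_mem_uIcc

section int
variable {α : ℝ} {R : ℝ} {u : ℝ → ℝ}

lemma vortex_int (hα : 0 < α) (hR : 0 < R) (hcont : ContinuousOn u (Icc 0 R))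
    (hE : IntegrableOn
      (fun r => r * (deriv u r) ^ 2 + (u r) ^ 2 / r + r * Real.log (1 + α * (u r) ^ 2))
      (Ioo 0 R)) :
    IntegrableOn (fun r => r * (deriv u r)^2) (Ioo 0 R) ∧
      IntegrableOn (fun r => r * (u r)^2) (Ioo 0 R) ∧
      IntegrableOn (fun r => (deriv u r)^2) (Ioo (R/2) R) := by
  have hum : AEMeasurable u (volume.restrict (Ioo (0:ℝ) R)) :=
    (hcont.mono Ioo_subset_Icc_self).aemeasurable measurableSet_Ioo
  have hbound : ∀ x ∈ Ioo (0:ℝ) R,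
      0 ≤ x * (deriv u x)^2 ∧ 0 ≤ (u x)^2 / x ∧ 0 ≤ x * Real.log (1 + α * (u x)^2) := by
    intro x hx
    refine ⟨mul_nonneg hx.1.le (sq_nonneg _), div_nonneg (sq_nonneg _) hx.1.le, ?_⟩
    exact mul_nonneg hx.1.le (Real.log_nonneg (by nlinarith [sq_nonneg (u x)]))
  have h1 : IntegrableOn (fun r => r * (deriv u r)^2) (Ioo 0 R) := by
    refine Integrable.mono hE
      ((measurable_id'.mul ((measurable_deriv u).pow_const 2)).aestronglyMeasurable) ?_
    filter_upwards [ae_restrict_mem measurableSet_Ioo] with x hx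
    obtain ⟨ha, hb, hc⟩ := hbound x hx
    rw [Real.norm_eq_abs, Real.norm_eq_abs, abs_of_nonneg ha, abs_of_nonneg (by linarith)]
    linarith
  have h2 : IntegrableOn (fun r => (u r)^2 / r) (Ioo 0 R) := by
    refine Integrable.mono hE (((hum.pow_const 2).div aemeasurable_id').aestronglyMeasurable) ?_
    filter_upwards [ae_restrict_mem measurableSet_Ioo] with x hx
    obtain ⟨ha, hb, hc⟩ := hbound x hx
    rw [Real.norm_eq_abs, Real.norm_eq_abs, abs_of_nonneg hb, abs_of_nonneg (by linarith)]
    linarith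
  have h3 : IntegrableOn (fun r => r * (u r)^2) (Ioo 0 R) := by
    refine Integrable.mono (h2.const_mul (R^2))
      ((aemeasurable_id'.mul (hum.pow_const 2)).aestronglyMeasurable) ?_
    filter_upwards [ae_restrict_mem measurableSet_Ioo] with x hx
    have hx0 : (0:ℝ) < x := hx.1
    have he : x * (u x)^2 = x^2 * ((u x)^2 / x) := by field_simp
    have hxx : x^2 ≤ R^2 := by nlinarith [hx.2, hx.1]
    rw [Real.norm_eq_abs, Real.norm_eq_abs, abs_of_nonneg (by positivity),
      abs_of_nonneg (by positivity), he]
    exact mul_le_mul_of_nonneg_right hxx (by positivity)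
  have h4 : IntegrableOn (fun r => (deriv u r)^2) (Ioo (R/2) R) := by
    have hIooss : Ioo (R/2) R ⊆ Ioo (0:ℝ) R := fun x hx => ⟨by linarith [hx.1], hx.2⟩
    refine Integrable.mono ((h1.mono_set hIooss).const_mul (2/R))
      (((measurable_deriv u).pow_const 2).aestronglyMeasurable) ?_
    filter_upwards [ae_restrict_mem measurableSet_Ioo] with x hx
    have h5 : 1 ≤ 2/R * x := by rw [div_mul_eq_mul_div, le_div_iff₀ hR]; linarith [hx.1]
    have hx0 : (0:ℝ) ≤ x := by linarith [hx.1]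
    rw [Real.norm_eq_abs, Real.norm_eq_abs, abs_of_nonneg (sq_nonneg _),
      abs_of_nonneg (mul_nonneg (by positivity) (mul_nonneg hx0 (sq_nonneg _)))]
    nlinarith [h5, sq_nonneg (deriv u x)]
  exact ⟨h1, h3, h4⟩

end int
set_option maxHeartbeats 1000000 in
theorem stmt8 (α : ℝ) (hα : 0 < α) (n : ℤ) (hn : 1 ≤ |n|) (κ R : ℝ) (hR : 0 < R)
    (u : ℝ → ℝ) (hu : IsVortexSol α n κ R u) (hE : FiniteEnergy α R u)
    (hnt : ∃ r ∈ Icc (0 : ℝ) R, u r ≠ 0)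
    (hwind : ((|n| : ℤ) : ℝ) ≥ fluxQ R u / Real.pi) :
    κ < 0 := by
  by_contra hcon
  push_neg at hcon
  obtain ⟨hcont, hdiff, hu0, huR, hode⟩ := hu
  obtain ⟨hInt1, hIntru2, hIntdu2⟩ := vortex_int hα hR hcont hE
  set C : ℝ := ∫ r in Ioo (0:ℝ) R, r * (u r)^2 with hC
  set N : ℝ := ((|n| : ℤ) : ℝ) with hN
  have hN1 : (1:ℝ) ≤ N := by rw [hN]; exact_mod_cast hn
  have hπ : (0:ℝ) < Real.pi := Real.pi_pos
  have hwind2 : 2 * C ≤ N := by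
    have hflux : fluxQ R u = 2 * Real.pi * C := rfl
    rw [ge_iff_le, hflux] at hwind
    calc 2*C = 2*Real.pi*C/Real.pi := by field_simp
      _ ≤ N := hwind
  obtain ⟨r₀, hr₀mem, hmax⟩ := isCompact_Icc.exists_isMaxOn (nonempty_Icc.mpr hR.le)
      ((hcont.pow 2) : ContinuousOn (fun x => (u x)^2) (Icc 0 R))
  set M : ℝ := (u r₀)^2 with hM
  have hMpos : 0 < M := by
    obtain ⟨r, hr, hur⟩ := hnt
    have h1 := hmax hr
    have h2 : (0:ℝ) < (u r)^2 := by positivity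
    simp only [hM]
    calc (0:ℝ) < (u r)^2 := h2
      _ ≤ (u r₀)^2 := h1
  have hr₀I : r₀ ∈ Ioo (0:ℝ) R := by
    refine ⟨lt_of_le_of_ne hr₀mem.1 ?_, lt_of_le_of_ne hr₀mem.2 ?_⟩
    · intro h
      rw [hM, ← h, hu0] at hMpos
      norm_num at hMpos
    · intro h
      rw [hM, h, huR] at hMpos
      norm_num at hMpos
  have main : ∀ ε : ℝ, 0 < ε → 2*N*M ≤ 2*M*C + ε := by
    intro ε hε
    -- continuity moduli for u² at the endpoints
    have hsq0 : ContinuousWithinAt (fun x => (u x)^2) (Icc 0 R) 0 :=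
      (hcont 0 (left_mem_Icc.mpr hR.le)).pow 2
    have hsqR : ContinuousWithinAt (fun x => (u x)^2) (Icc 0 R) R :=
      (hcont R (right_mem_Icc.mpr hR.le)).pow 2
    set ε₁ : ℝ := min 1 (ε/(4*(N+1))) with hε₁
    have hε₁pos : 0 < ε₁ := lt_min one_pos (by positivity)
    obtain ⟨δ₁, hδ₁pos, hδ₁⟩ := Metric.continuousWithinAt_iff.mp hsq0 ε₁ hε₁pos
    obtain ⟨δ₂, hδ₂pos, hδ₂⟩ := Metric.continuousWithinAt_iff.mp hsqR ε₁ hε₁pos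
    -- choice of a near 0
    set d : ℝ := min δ₁ r₀ with hd
    have hdpos : 0 < d := lt_min hδ₁pos hr₀I.1
    have hdr₀ : d ≤ r₀ := min_le_right _ _
    obtain ⟨a, haI, ha1⟩ := exists_small_left (fun r => r * (deriv u r)^2) 0 d hdpos
        (hInt1.mono_set (fun x hx => ⟨hx.1, lt_of_lt_of_le hx.2 (le_trans hdr₀ hr₀I.2.le)⟩))
        ((ε/4)^2) (by positivity)
    have haIR : a ∈ Ioo (0:ℝ) R := ⟨haI.1, lt_of_lt_of_le haI.2 (le_trans hdr₀ hr₀I.2.le)⟩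
    have har₀ : a ≤ r₀ := le_trans haI.2.le hdr₀
    have hua : (u a)^2 < ε₁ := by
      have h0 := hδ₁ (show a ∈ Icc 0 R from ⟨haI.1.le, haIR.2.le⟩)
        (show dist a 0 < δ₁ by
          rw [Real.dist_eq, sub_zero, abs_of_nonneg haI.1.le]
          exact lt_of_lt_of_le haI.2 (min_le_left _ _))
      rw [Real.dist_eq, hu0] at h0
      simpa [abs_of_nonneg (sq_nonneg (u a))] using h0
    have hφa : |a * deriv u a * u a| ≤ ε/4 := by
      have h1 : (a * deriv u a * u a)^2 < (ε/4)^2 * 1 := by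
        have e : (a * deriv u a * u a)^2 = ((a - 0) * (a * (deriv u a)^2)) * (u a)^2 := by ring
        have h2 : (0:ℝ) ≤ (a - 0) * (a * (deriv u a)^2) := by
          nlinarith [sq_nonneg (a * deriv u a)]
        have h3 : (u a)^2 ≤ 1 := le_trans hua.le (min_le_left _ _)
        rw [e]
        nlinarith [sq_nonneg (u a)]
      nlinarith [abs_nonneg (a * deriv u a * u a), sq_abs (a * deriv u a * u a), hε]
    have hNua : N * (u a)^2 ≤ ε/4 := by
      have h3 : (u a)^2 ≤ ε/(4*(N+1)) := le_trans hua.le (min_le_right _ _)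
      have h4 : N * (u a)^2 ≤ N * (ε/(4*(N+1))) := mul_le_mul_of_nonneg_left h3 (by linarith)
      have h5 : N * (ε/(4*(N+1))) ≤ ε/4 := by
        rw [show N * (ε/(4*(N+1))) = N * ε / (4*(N+1)) from by ring,
          div_le_div_iff₀ (by linarith) (by norm_num)]
        linarith [hε.le]
      linarith
    -- choice of b near R
    set Itot : ℝ := ∫ x in Ioo (R/2) R, (deriv u x)^2 with hItot
    have hItot0 : 0 ≤ Itot := setIntegral_nonneg measurableSet_Ioo (fun x _ => sq_nonneg _)
    set K : ℝ := (Itot + 1)/2 with hK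
    have hKpos : 0 < K := by rw [hK]; linarith
    set η : ℝ := ε/(4*(R*K+1)) with hη
    have hRK : 0 < R*K + 1 := by nlinarith
    have hηpos : 0 < η := by rw [hη]; exact div_pos hε (by linarith)
    set c : ℝ := max (max r₀ (R/2)) (R - δ₂) with hc
    have hcR : c < R := by
      rw [hc]
      exact max_lt (max_lt hr₀I.2 (by linarith)) (by linarith)
    have hc2 : R/2 ≤ c := le_trans (le_max_right r₀ (R/2)) (le_max_left _ _)
    obtain ⟨b, hbI, hb1⟩ := exists_small_right (fun r => (deriv u r)^2) c R hcR
        (hIntdu2.mono_set (fun x hx => ⟨lt_of_le_of_lt hc2 hx.1, hx.2⟩)) (η^2) (by positivity)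
    have hbIR : b ∈ Ioo (0:ℝ) R := ⟨by linarith [hbI.1, hc2, hR], hbI.2⟩
    have hr₀b : r₀ ≤ b := le_trans (le_trans (le_max_left r₀ (R/2)) (le_max_left _ _)) hbI.1.le
    have hbhalf : b ∈ Ioo (R/2) R := ⟨lt_of_le_of_lt hc2 hbI.1, hbI.2⟩
    have hub : |u b| ≤ Real.sqrt (R - b) * K :=
      vortex_decay hR hdiff hcont huR hIntdu2 hbhalf
    have hudb : |deriv u b| * Real.sqrt (R - b) ≤ η := by
      have h1 : (|deriv u b| * Real.sqrt (R - b))^2 < η^2 := by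
        rw [mul_pow, sq_abs, Real.sq_sqrt (by linarith [hbI.2] : (0:ℝ) ≤ R - b)]
        calc (deriv u b)^2 * (R - b) = (R - b) * (deriv u b)^2 := by ring
          _ < η^2 := hb1
      nlinarith [mul_nonneg (abs_nonneg (deriv u b)) (Real.sqrt_nonneg (R - b)), hηpos]
    have hφb : |b * deriv u b * u b| ≤ ε/4 := by
      have hb0 : (0:ℝ) ≤ b := by linarith [hbIR.1]
      have e1 : |b * deriv u b * u b| = b * (|deriv u b| * |u b|) := by
        rw [abs_mul, abs_mul, abs_of_nonneg hb0]; ring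
      have e2 : |deriv u b| * |u b| ≤ |deriv u b| * (Real.sqrt (R - b) * K) :=
        mul_le_mul_of_nonneg_left hub (abs_nonneg _)
      have e4 : (|deriv u b| * Real.sqrt (R - b)) * K ≤ η * K :=
        mul_le_mul_of_nonneg_right hudb hKpos.le
      have e5 : b * (η * K) ≤ R * (η * K) :=
        mul_le_mul_of_nonneg_right hbIR.2.le (by positivity)
      have e6 : R * (η * K) ≤ ε/4 := by
        rw [hη, show R * (ε / (4*(R*K+1)) * K) = (R*K) * ε / (4*(R*K+1)) from by ring,
          div_le_div_iff₀ (by linarith) (by norm_num)]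
        linarith [hε.le]
      have e7 : b * (|deriv u b| * |u b|) ≤ b * (η * K) := by
        refine mul_le_mul_of_nonneg_left ?_ hb0
        calc |deriv u b| * |u b| ≤ |deriv u b| * (Real.sqrt (R - b) * K) := e2
          _ = (|deriv u b| * Real.sqrt (R - b)) * K := by ring
          _ ≤ η * K := e4
      rw [e1]
      linarith
    have hub2 : (u b)^2 < ε₁ := by
      have h0 := hδ₂ (show b ∈ Icc 0 R from ⟨by linarith [hbIR.1], hbIR.2.le⟩)
        (show dist b R < δ₂ by
          rw [Real.dist_eq, abs_of_nonpos (by linarith [hbIR.2] : b - R ≤ 0)]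
          have : R - δ₂ ≤ c := le_max_right _ _
          linarith [hbI.1])
      rw [Real.dist_eq, huR] at h0
      simpa [abs_of_nonneg (sq_nonneg (u b))] using h0
    have hNub : N * (u b)^2 ≤ ε/4 := by
      have h3 : (u b)^2 ≤ ε/(4*(N+1)) := le_trans hub2.le (min_le_right _ _)
      have h4 : N * (u b)^2 ≤ N * (ε/(4*(N+1))) := mul_le_mul_of_nonneg_left h3 (by linarith)
      have h5 : N * (ε/(4*(N+1))) ≤ ε/4 := by
        rw [show N * (ε/(4*(N+1))) = N * ε / (4*(N+1)) from by ring,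
          div_le_div_iff₀ (by linarith) (by norm_num)]
        linarith [hε.le]
      linarith
    -- assemble
    have h1 := (vortex_lower (n := n) hdiff haIR hr₀I har₀).1
    have h2 := (vortex_lower (n := n) hdiff hr₀I hbIR hr₀b).2
    have hi1 : IntervalIntegrable (fun x => x * (deriv u x)^2 + ((n:ℝ)^2/x) * (u x)^2) volume a r₀ := by
      apply ContinuousOn.intervalIntegrable
      rw [Set.uIcc_of_le har₀]
      exact vortex_cont_F hdiff (fun x hx => ⟨lt_of_lt_of_le haIR.1 hx.1, lt_of_le_of_lt hx.2 hr₀I.2⟩)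
    have hi2 : IntervalIntegrable (fun x => x * (deriv u x)^2 + ((n:ℝ)^2/x) * (u x)^2) volume r₀ b := by
      apply ContinuousOn.intervalIntegrable
      rw [Set.uIcc_of_le hr₀b]
      exact vortex_cont_F hdiff (fun x hx => ⟨lt_of_lt_of_le hr₀I.1 hx.1, lt_of_le_of_lt hx.2 hbIR.2⟩)
    have hadd := intervalIntegral.integral_add_adjacent_intervals hi1 hi2
    have hkey := vortex_FTC hα hdiff hode haIR hbIR (le_trans har₀ hr₀b)
    have hup := vortex_upper hα hcon hdiff haIR hbIR (le_trans har₀ hr₀b)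
        (fun x hx => hmax (show x ∈ Icc 0 R from
          ⟨by linarith [haIR.1, hx.1], by linarith [hbIR.2, hx.2]⟩)) hIntru2
    obtain ⟨hφa1, hφa2⟩ := abs_le.mp hφa
    obtain ⟨hφb1, hφb2⟩ := abs_le.mp hφb
    -- h1 : N*((u r₀)² - (u a)²) ≤ ∫ a..r₀ F ; h2 : N*((u r₀)² - (u b)²) ≤ ∫ r₀..b F
    have hNM : N * ((u r₀)^2 - (u a)^2) + N * ((u r₀)^2 - (u b)^2)
        ≤ (b * deriv u b * u b - a * deriv u a * u a) + (2*M*C) := by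
      calc N * ((u r₀)^2 - (u a)^2) + N * ((u r₀)^2 - (u b)^2)
          ≤ (∫ x in a..r₀, (x * (deriv u x)^2 + ((n:ℝ)^2/x) * (u x)^2))
            + ∫ x in r₀..b, (x * (deriv u x)^2 + ((n:ℝ)^2/x) * (u x)^2) := add_le_add h1 h2
        _ = ∫ x in a..b, (x * (deriv u x)^2 + ((n:ℝ)^2/x) * (u x)^2) := hadd
        _ = (b * deriv u b * u b - a * deriv u a * u a)
            + ∫ x in a..b, (2*x*(u x)^4/(1+α*(u x)^2) - 2*κ*x*(u x)^2) := hkey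
        _ ≤ (b * deriv u b * u b - a * deriv u a * u a) + (2*M*C) := by
            rw [hC]; exact add_le_add le_rfl hup
    rw [hM] at hNM ⊢
    linarith [hNM, hNua, hNub, hφa1, hφa2, hφb1, hφb2]
  have hfin : 2*N*M ≤ 2*M*C := le_of_forall_pos_le_add main
  have hNC : N ≤ C := by
    by_contra hlt
    push_neg at hlt
    nlinarith [mul_pos hMpos (sub_pos.mpr hlt)]
  linarith
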